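/- arXiv:1705.06007 — 2 statements merged into one kernel-verified Lean document; each statement's English description precedes it below -/
import Mathlib

section
/- For every k ≥ 1, every 1 ≤ i ≤ k, and every x ∈ B_k, one has Σ_{i,k}(Φ_k(x)) = Φ_k(Θ_i(x)). -/
open MvPolynomial

set_option synthInstance.maxHeartbeats 400000
set_option maxHeartbeats 1000000

noncomputable def relIdeal (p r k : ℕ) [Fact p.Prime] : Ideal (MvPolynomial (Fin k) (GaloisField p r)) :=
  Ideal.span (Set.range fun i : Fin k => X i ^ 2 - X i)

abbrev B (p r k : ℕ) [Fact p.Prime] :=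
  MvPolynomial (Fin k) (GaloisField p r) ⧸ relIdeal p r k

noncomputable def v (p r k : ℕ) [Fact p.Prime] (i : Fin k) : B p r k :=
  Ideal.Quotient.mk _ (X i)

lemma v_idem (p r k : ℕ) [Fact p.Prime] (i : Fin k) : v p r k i ^ 2 = v p r k i := by
  have h : (X i ^ 2 - X i : MvPolynomial (Fin k) (GaloisField p r)) ∈ relIdeal p r k :=
    Ideal.subset_span ⟨i, rfl⟩
  have h2 := (Ideal.Quotient.eq_zero_iff_mem).mpr h
  rw [map_sub, map_pow] at h2
  have h3 := sub_eq_zero.mp h2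
  simpa [v] using h3

lemma one_sub_v_idem (p r k : ℕ) [Fact p.Prime] (i : Fin k) :
    (1 - v p r k i) ^ 2 = 1 - v p r k i := by
  have h : (1 - v p r k i) ^ 2 = 1 - 2 * v p r k i + v p r k i ^ 2 := by ring
  rw [h, v_idem]; ring

noncomputable def ThAux (p r k : ℕ) [Fact p.Prime] (S : Finset (Fin k)) :
    MvPolynomial (Fin k) (GaloisField p r) →+* B p r k :=
  (aeval (fun i : Fin k => if i ∈ S then 1 - v p r k i else v p r k i)).toRingHom

lemma ThAux_cond (p r k : ℕ) [Fact p.Prime] (S : Finset (Fin k)) :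
    relIdeal p r k ≤ RingHom.ker (ThAux p r k S) := by
  refine Ideal.span_le.mpr ?_
  rintro _ ⟨i, rfl⟩
  simp only [SetLike.mem_coe, RingHom.mem_ker, ThAux, AlgHom.toRingHom_eq_coe,
    RingHom.coe_coe, map_sub, map_pow, aeval_X]
  by_cases h : i ∈ S
  · rw [if_pos h, one_sub_v_idem, sub_self]
  · rw [if_neg h, v_idem, sub_self]

/-- The automorphism `Θ_S` of `B_k`, determined by `v_i ↦ 1 - v_i` for `i ∈ S` and
`v_i ↦ v_i` otherwise, fixing `F_{p^r}` pointwise. -/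
noncomputable def Th (p r k : ℕ) [Fact p.Prime] (S : Finset (Fin k)) :
    B p r k →+* B p r k :=
  Ideal.Quotient.lift (relIdeal p r k) (ThAux p r k S) (fun _ ha => ThAux_cond p r k S ha)

noncomputable def LamAux (p r k : ℕ) [Fact p.Prime] (π : Equiv.Perm (Fin k)) (t : ℕ) :
    MvPolynomial (Fin k) (GaloisField p r) →+* B p r k :=
  eval₂Hom ((Ideal.Quotient.mk (relIdeal p r k)).comp
      ((C : GaloisField p r →+* MvPolynomial (Fin k) (GaloisField p r)).comp
        (iterateFrobenius (GaloisField p r) p t)))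
    (fun i => v p r k (π i))

lemma LamAux_cond (p r k : ℕ) [Fact p.Prime] (π : Equiv.Perm (Fin k)) (t : ℕ) :
    relIdeal p r k ≤ RingHom.ker (LamAux p r k π t) := by
  refine Ideal.span_le.mpr ?_
  rintro _ ⟨i, rfl⟩
  simp only [SetLike.mem_coe, RingHom.mem_ker, LamAux, map_sub, map_pow, eval₂Hom_X']
  rw [v_idem, sub_self]

/-- The automorphism `Λ_{π,t}` of `B_k`, acting on `F_{p^r}` as the Frobenius power
`α ↦ α^{p^t}` and sending `v_i ↦ v_{π(i)}`. -/
noncomputable def Lam (p r k : ℕ) [Fact p.Prime] (π : Equiv.Perm (Fin k)) (t : ℕ) :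
    B p r k →+* B p r k :=
  Ideal.Quotient.lift (relIdeal p r k) (LamAux p r k π t) (fun _ ha => LamAux_cond p r k π t ha)

noncomputable def PhiAux (p r k : ℕ) [Fact p.Prime] :
    MvPolynomial (Fin k) (GaloisField p r) →+* (Fin (2 ^ k) → GaloisField p r) :=
  Pi.ringHom fun j =>
    eval₂Hom (RingHom.id (GaloisField p r))
      (fun i : Fin k => if Nat.testBit (j : ℕ) (i : ℕ) then 1 else 0)

lemma PhiAux_cond (p r k : ℕ) [Fact p.Prime] :
    relIdeal p r k ≤ RingHom.ker (PhiAux p r k) := by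
  refine Ideal.span_le.mpr ?_
  rintro _ ⟨i, rfl⟩
  simp only [SetLike.mem_coe, RingHom.mem_ker, PhiAux]
  funext j
  simp only [Pi.ringHom, RingHom.pi_apply, map_sub, map_pow, eval₂Hom_X']
  by_cases h : Nat.testBit (j : ℕ) (i : ℕ) <;> simp [h]

/-- The Gray map `Φ_k : B_k → F_{p^r}^{2^k}`: the coordinate indexed by `j` is the
evaluation of (a representative of) an element of `B_k` at the point whose `i`-th
coordinate is the `i`-th binary digit of `j`.  This agrees with the recursive
definition `Φ_k(α + β v_k) = (Φ_{k-1}(α), Φ_{k-1}(α + β))`, `Φ_0 = id`. -/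
noncomputable def Phi (p r k : ℕ) [Fact p.Prime] :
    B p r k →+* (Fin (2 ^ k) → GaloisField p r) :=
  Ideal.Quotient.lift (relIdeal p r k) (PhiAux p r k) (fun _ ha => PhiAux_cond p r k ha)

lemma sum_two_pow_lt (k : ℕ) (S : Finset (Fin k)) : (∑ i ∈ S, 2 ^ (i : ℕ)) < 2 ^ k := by
  have h1 : (∑ i ∈ S, 2 ^ (i : ℕ)) ≤ ∑ i ∈ (Finset.univ : Finset (Fin k)), 2 ^ (i : ℕ) :=
    Finset.sum_le_sum_of_subset (Finset.subset_univ S)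
  have h2 : ∑ i ∈ (Finset.univ : Finset (Fin k)), 2 ^ (i : ℕ) =
      ∑ i ∈ Finset.range k, 2 ^ i := Fin.sum_univ_eq_sum_range _ _
  have h3 : ∀ n : ℕ, (∑ i ∈ Finset.range n, 2 ^ i) < 2 ^ n := by
    intro n
    induction n with
    | zero => simp
    | succ m ih => rw [Finset.sum_range_succ, pow_succ]; omega
  have h4 := h3 k
  omega

/-- The permutation `Σ_{S,k}` of `{1,…,2^k}` : on 0-based indices it is
`j ↦ j XOR (Σ_{i ∈ S} 2^{i-1})`, i.e. the composition over `i ∈ S` of the permutations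
`Σ_{i,k}` which, within each consecutive block of `2^i` coordinates, cyclically shift the
block by `2^{i-1}` positions (flip the binary digit `i-1`). -/
def SigmaPerm (k : ℕ) (S : Finset (Fin k)) : Equiv.Perm (Fin (2 ^ k)) :=
  Function.Involutive.toPerm
    (fun j => ⟨(j : ℕ) ^^^ ∑ i ∈ S, 2 ^ (i : ℕ),
      Nat.xor_lt_two_pow j.isLt (sum_two_pow_lt k S)⟩)
    (by
      intro j
      apply Fin.ext
      simp [Nat.xor_assoc])

/-- For every `k ≥ 1`, `1 ≤ i ≤ k` and `x ∈ B_k`, `Σ_{i,k}(Φ_k(x)) = Φ_k(Θ_i(x))`. -/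
theorem stmt_11 (p r k : ℕ) [Fact p.Prime] (hr : 1 ≤ r) (hk : 1 ≤ k)
    (i : Fin k) (x : B p r k) :
    (fun j : Fin (2 ^ k) => Phi p r k x (SigmaPerm k {i} j)) =
      Phi p r k (Th p r k {i} x) := by
  have Phi_v : ∀ (n : Fin k) (j : Fin (2 ^ k)),
      Phi p r k (v p r k n) j = (if Nat.testBit (j : ℕ) (n : ℕ) then 1 else 0) := by
    intro n j
    simp [Phi, v, PhiAux, Ideal.Quotient.lift_mk, Pi.ringHom, RingHom.pi_apply]
  have Th_v : ∀ n : Fin k,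
      Th p r k {i} (v p r k n) = if n = i then 1 - v p r k n else v p r k n := by
    intro n
    simp only [Th, v, Ideal.Quotient.lift_mk, ThAux, AlgHom.toRingHom_eq_coe,
      RingHom.coe_coe, aeval_X, Finset.mem_singleton]
  have key :
      (Pi.ringHom (fun j : Fin (2 ^ k) =>
        (Pi.evalRingHom (fun _ : Fin (2 ^ k) => GaloisField p r)
          (SigmaPerm k {i} j)).comp (Phi p r k))) =
      (Phi p r k).comp (Th p r k {i}) := by
    apply Ideal.Quotient.ringHom_ext
    apply MvPolynomial.ringHom_ext
    · intro a
      funext j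
      show Phi p r k (Ideal.Quotient.mk _ (C a)) (SigmaPerm k {i} j) =
        Phi p r k (Th p r k {i} (Ideal.Quotient.mk _ (C a))) j
      have hTh : Th p r k {i} (Ideal.Quotient.mk (relIdeal p r k) (C a)) =
          Ideal.Quotient.mk (relIdeal p r k) (C a) := by
        simp only [Th, Ideal.Quotient.lift_mk, ThAux, AlgHom.toRingHom_eq_coe,
          RingHom.coe_coe]
        rw [show ((C a : MvPolynomial (Fin k) (GaloisField p r))) = algebraMap _ _ a from rfl,
          AlgHom.commutes]
        rfl
      rw [hTh]
      simp [Phi, PhiAux, Ideal.Quotient.lift_mk, Pi.ringHom, RingHom.pi_apply]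
    · intro n
      funext j
      show Phi p r k (v p r k n) (SigmaPerm k {i} j) =
        Phi p r k (Th p r k {i} (v p r k n)) j
      have hx : ((SigmaPerm k {i} j : Fin (2 ^ k)) : ℕ) = (j : ℕ) ^^^ 2 ^ (i : ℕ) := by
        simp [SigmaPerm, Function.Involutive.toPerm]
      rw [Phi_v, Th_v, hx, Nat.testBit_xor]
      by_cases hn : n = i
      · subst hn
        rw [if_pos rfl, Nat.testBit_two_pow_self, map_sub, map_one, Pi.sub_apply,
          Pi.one_apply, Phi_v]
        cases h : Nat.testBit (j : ℕ) (n : ℕ) <;> simp [h]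
      · rw [if_neg hn, Phi_v,
          Nat.testBit_two_pow_of_ne (fun h => hn (Fin.ext h.symm))]
        simp
  exact DFunLike.congr_fun key x
end

section
/- Let θ = Θ_S ∘ Λ_{π,t} be an automorphism of B_k and let σ_θ be the permutation of {1,…,2^k} such that (Φ_k(θ(a)))_i = ((Φ_k(a))_{σ_θ^{−1}(i)})^{p^t} for all a ∈ B_k. Then a B_k-submodule C of B_k^n is a Euclidean self-dual θ-cyclic code of length n if and only if there exist Euclidean self-dual F_{p^r}-linear codes C_1,…,C_{2^k} ⊆ F_{p^r}^n such that C = Ψ̄_k^{−1}(C_1,…,C_{2^k}) and T_{φ^t}(C_i) ⊆ C_{σ_θ(i)} for every i, where φ is the Frobenius α ↦ α^p of F_{p^r} and T_{φ^t}(c_0,…,c_{n−1}) = (φ^t(c_{n−1}), φ^t(c_0), …, φ^t(c_{n−2})). -/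
open MvPolynomial

set_option synthInstance.maxHeartbeats 400000
set_option maxHeartbeats 1000000

/-! ### Auxiliary lemmas for the main theorem -/

/-- The constant embedding `F_{p^r} → B_k`. -/
noncomputable def cst (p r k : ℕ) [Fact p.Prime] : GaloisField p r →+* B p r k :=
  (Ideal.Quotient.mk (relIdeal p r k)).comp (C : GaloisField p r →+* MvPolynomial (Fin k) (GaloisField p r))

lemma Phi_cst_apply (p r k : ℕ) [Fact p.Prime] (α : GaloisField p r) (j : Fin (2 ^ k)) :
    Phi p r k (cst p r k α) j = α := by
  simp [Phi, cst, PhiAux, Ideal.Quotient.lift_mk, Pi.ringHom, RingHom.pi_apply]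

lemma Phi_v_apply (p r k : ℕ) [Fact p.Prime] (i : Fin k) (j : Fin (2 ^ k)) :
    Phi p r k (v p r k i) j = if Nat.testBit (j : ℕ) (i : ℕ) then 1 else 0 := by
  simp [Phi, v, PhiAux, Ideal.Quotient.lift_mk, Pi.ringHom, RingHom.pi_apply]

/-- The idempotent of `B_k` corresponding to coordinate `j` of the Gray map. -/
noncomputable def eIdem (p r k : ℕ) [Fact p.Prime] (j : Fin (2 ^ k)) : B p r k :=
  ∏ i : Fin k, if Nat.testBit (j : ℕ) (i : ℕ) then v p r k i else 1 - v p r k i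

lemma Phi_eIdem (p r k : ℕ) [Fact p.Prime] (j j' : Fin (2 ^ k)) :
    Phi p r k (eIdem p r k j) j' = if j' = j then 1 else 0 := by
  have hfac : ∀ i : Fin k,
      Phi p r k (if Nat.testBit (j : ℕ) (i : ℕ) then v p r k i else 1 - v p r k i) j' =
        if Nat.testBit (j' : ℕ) (i : ℕ) = Nat.testBit (j : ℕ) (i : ℕ) then 1 else 0 := by
    intro i
    by_cases h : Nat.testBit (j : ℕ) (i : ℕ) <;>
      by_cases h' : Nat.testBit (j' : ℕ) (i : ℕ) <;>
        simp [h, h', Phi_v_apply, map_sub, Pi.sub_apply, map_one, Pi.one_apply]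
  have hprod : Phi p r k (eIdem p r k j) j' =
      ∏ i : Fin k, (if Nat.testBit (j' : ℕ) (i : ℕ) = Nat.testBit (j : ℕ) (i : ℕ)
        then (1 : GaloisField p r) else 0) := by
    rw [eIdem, map_prod, Finset.prod_apply]
    exact Finset.prod_congr rfl fun i _ => hfac i
  by_cases hjj : j' = j
  · subst hjj
    rw [hprod, if_pos rfl]
    simp
  · rw [hprod, if_neg hjj]
    have : ∃ i : Fin k, Nat.testBit (j' : ℕ) (i : ℕ) ≠ Nat.testBit (j : ℕ) (i : ℕ) := by
      by_contra hcon
      push_neg at hcon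
      apply hjj
      apply Fin.ext
      apply Nat.eq_of_testBit_eq
      intro m
      by_cases hm : m < k
      · exact hcon ⟨m, hm⟩
      · have hk : (2 : ℕ) ^ k ≤ 2 ^ m := Nat.pow_le_pow_right (by norm_num) (le_of_not_gt hm)
        rw [Nat.testBit_lt_two_pow (lt_of_lt_of_le j'.isLt hk),
          Nat.testBit_lt_two_pow (lt_of_lt_of_le j.isLt hk)]
    obtain ⟨i, hi⟩ := this
    exact Finset.prod_eq_zero (Finset.mem_univ i) (if_neg hi)

lemma sum_eIdem (p r k : ℕ) [Fact p.Prime] : ∑ j, eIdem p r k j = 1 := by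
  have key := Equiv.sum_comp (finFunctionFinEquiv (m := 2) (n := k)) (eIdem p r k)
  rw [← key]
  have hterm : ∀ g : Fin k → Fin 2,
      eIdem p r k (finFunctionFinEquiv g) =
        ∏ i : Fin k, (if ((g i : ℕ) = 1) then v p r k i else 1 - v p r k i) := by
    intro g
    refine Finset.prod_congr rfl fun i _ => ?_
    have hb : Nat.testBit ((finFunctionFinEquiv g : Fin (2 ^ k)) : ℕ) (i : ℕ) =
        decide ((g i : ℕ) = 1) := by
      rw [Nat.testBit_eq_decide_div_mod_eq]
      have := finFunctionFinEquiv_symm_apply_val (m := 2) (n := k) (finFunctionFinEquiv g) i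
      rw [Equiv.symm_apply_apply] at this
      rw [← this]
    rw [hb]
    by_cases h : (g i : ℕ) = 1 <;> simp [h]
  rw [Finset.sum_congr rfl fun g _ => hterm g]
  have := Finset.prod_univ_sum (fun _ : Fin k => (Finset.univ : Finset (Fin 2)))
    (fun i x => if ((x : ℕ) = 1) then v p r k i else 1 - v p r k i)
  rw [Fintype.piFinset_univ] at this
  rw [← this]
  have : ∀ i : Fin k,
      (∑ x : Fin 2, if ((x : ℕ) = 1) then v p r k i else 1 - v p r k i) = 1 := by
    intro i
    rw [Fin.sum_univ_two]
    norm_num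
  rw [Finset.prod_congr rfl fun i _ => this i, Finset.prod_const_one]

lemma v_mul_eIdem (p r k : ℕ) [Fact p.Prime] (i : Fin k) (j : Fin (2 ^ k)) :
    v p r k i * eIdem p r k j =
      (if Nat.testBit (j : ℕ) (i : ℕ) then 1 else 0) * eIdem p r k j := by
  have hsplit := Finset.mul_prod_erase Finset.univ
    (fun i' : Fin k => if Nat.testBit (j : ℕ) (i' : ℕ) then v p r k i' else 1 - v p r k i')
    (Finset.mem_univ i)
  by_cases h : Nat.testBit (j : ℕ) (i : ℕ)
  · rw [if_pos h, one_mul, eIdem, ← hsplit]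
    rw [if_pos h, ← mul_assoc, ← pow_two, v_idem]
  · rw [if_neg h, zero_mul, eIdem, ← hsplit]
    rw [if_neg h, ← mul_assoc]
    have h0 : v p r k i * (1 - v p r k i) = 0 := by
      have := v_idem p r k i
      rw [mul_sub, mul_one, ← pow_two, this, sub_self]
    rw [h0, zero_mul]

lemma mul_eIdem (p r k : ℕ) [Fact p.Prime] (a : B p r k) (j : Fin (2 ^ k)) :
    a * eIdem p r k j = cst p r k (Phi p r k a j) * eIdem p r k j := by
  obtain ⟨q, rfl⟩ := Ideal.Quotient.mk_surjective a
  induction q using MvPolynomial.induction_on with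
  | C α =>
      have h1 : (Ideal.Quotient.mk (relIdeal p r k)) (C α) = cst p r k α := rfl
      rw [h1, Phi_cst_apply]
  | add f g hf hg =>
      rw [map_add, add_mul, hf, hg, map_add, Pi.add_apply, map_add, add_mul]
  | mul_X f i hf =>
      have h1 : (Ideal.Quotient.mk (relIdeal p r k)) (f * X i) =
          (Ideal.Quotient.mk (relIdeal p r k)) f * v p r k i := by
        rw [map_mul]; rfl
      rw [h1, mul_assoc, v_mul_eIdem]
      by_cases h : Nat.testBit (j : ℕ) (i : ℕ)
      · rw [if_pos h, one_mul, hf]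
        congr 2
        rw [map_mul, Pi.mul_apply, Phi_v_apply, if_pos h, mul_one]
      · rw [if_neg h, zero_mul, mul_zero]
        have : Phi p r k ((Ideal.Quotient.mk (relIdeal p r k)) f * v p r k i) j = 0 := by
          rw [map_mul, Pi.mul_apply, Phi_v_apply, if_neg h, mul_zero]
        rw [this, map_zero, zero_mul]

lemma decomp (p r k : ℕ) [Fact p.Prime] (a : B p r k) :
    a = ∑ j, cst p r k (Phi p r k a j) * eIdem p r k j := by
  conv_lhs => rw [← mul_one a, ← sum_eIdem p r k]
  rw [Finset.mul_sum]
  exact Finset.sum_congr rfl fun j _ => mul_eIdem p r k a j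

lemma Phi_inj (p r k : ℕ) [Fact p.Prime] : Function.Injective (Phi p r k) := by
  intro a b h
  rw [decomp p r k a, decomp p r k b, h]

lemma lift_proj (p r k : ℕ) [Fact p.Prime] (α : GaloisField p r) (i i' : Fin (2 ^ k)) :
    Phi p r k (cst p r k α * eIdem p r k i) i' = if i' = i then α else 0 := by
  rw [map_mul, Pi.mul_apply, Phi_cst_apply, Phi_eIdem]
  by_cases h : i' = i <;> simp [h]

/-- The `i`-th projected code of a `B_k`-linear code `C`. -/
noncomputable def projCode (p r k n : ℕ) [Fact p.Prime]
    (C : Submodule (B p r k) (Fin n → B p r k)) (i : Fin (2 ^ k)) :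
    Submodule (GaloisField p r) (Fin n → GaloisField p r) where
  carrier := {f | ∃ c ∈ C, ∀ b, Phi p r k (c b) i = f b}
  add_mem' := by
    rintro f g ⟨c, hc, hcf⟩ ⟨d, hd, hdf⟩
    exact ⟨c + d, C.add_mem hc hd, fun b => by
      simp [Pi.add_apply, map_add, hcf b, hdf b]⟩
  zero_mem' := ⟨0, C.zero_mem, fun b => by simp⟩
  smul_mem' := by
    rintro α f ⟨c, hc, hcf⟩
    refine ⟨cst p r k α • c, C.smul_mem _ hc, fun b => ?_⟩
    simp [Pi.smul_apply, smul_eq_mul, map_mul, Phi_cst_apply, hcf b]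

lemma mem_projCode_self (p r k n : ℕ) [Fact p.Prime]
    {C : Submodule (B p r k) (Fin n → B p r k)} {a : Fin n → B p r k}
    (ha : a ∈ C) (i : Fin (2 ^ k)) :
    (fun b => Phi p r k (a b) i) ∈ projCode p r k n C i :=
  ⟨a, ha, fun _ => rfl⟩

lemma mem_of_proj (p r k n : ℕ) [Fact p.Prime]
    {C : Submodule (B p r k) (Fin n → B p r k)} {a : Fin n → B p r k}
    (h : ∀ i, (fun b => Phi p r k (a b) i) ∈ projCode p r k n C i) : a ∈ C := by
  choose c hcC hc using h
  have key : a = ∑ i, eIdem p r k i • c i := by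
    funext b
    rw [decomp p r k (a b), Finset.sum_apply]
    refine Finset.sum_congr rfl fun i _ => ?_
    have h1 : (eIdem p r k i • c i) b = cst p r k (Phi p r k (c i b) i) * eIdem p r k i := by
      rw [Pi.smul_apply, smul_eq_mul, mul_comm, mul_eIdem]
    rw [h1, hc i b]
  rw [key]
  exact Submodule.sum_mem _ fun i _ => C.smul_mem _ (hcC i)

/-- With `θ = Θ_S ∘ Λ_{π,t}` and `σ_θ` its induced coordinate permutation, a
`B_k`-submodule `C` of `B_k^n` is a Euclidean self-dual `θ`-cyclic code iff there are
Euclidean self-dual `F_{p^r}`-linear codes `C_1, …, C_{2^k}` with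
`C = Ψ̄_k^{-1}(C_1, …, C_{2^k})` and `T_{φ^t}(C_i) ⊆ C_{σ_θ(i)}` for all `i`. -/
theorem stmt_18 (p r k n : ℕ) [Fact p.Prime] [NeZero n] (hr : 1 ≤ r)
    (S : Finset (Fin k)) (π : Equiv.Perm (Fin k)) (t : ℕ) (ht : t < r)
    (σ : Equiv.Perm (Fin (2 ^ k)))
    (hσ : ∀ (a : B p r k) (i : Fin (2 ^ k)),
      Phi p r k (Th p r k S (Lam p r k π t a)) i = Phi p r k a (σ.symm i) ^ p ^ t)
    (C : Submodule (B p r k) (Fin n → B p r k)) :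
    ((∀ c ∈ C, (fun b : Fin n => Th p r k S (Lam p r k π t (c (b - 1)))) ∈ C) ∧
        (C : Set (Fin n → B p r k)) =
          {b : Fin n → B p r k | ∀ c ∈ C, ∑ j, b j * c j = 0}) ↔
      ∃ D : Fin (2 ^ k) → Submodule (GaloisField p r) (Fin n → GaloisField p r),
        (C : Set (Fin n → B p r k)) =
            {a | ∀ i : Fin (2 ^ k), (fun b => Phi p r k (a b) i) ∈ D i} ∧
        (∀ i : Fin (2 ^ k),
          (D i : Set (Fin n → GaloisField p r)) = {b | ∀ c ∈ D i, ∑ j, b j * c j = 0}) ∧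
        ∀ i : Fin (2 ^ k), ∀ c ∈ D i,
          (fun b : Fin n => c (b - 1) ^ p ^ t) ∈ D (σ i) := by
  -- orthogonality transfer through the Gray map
  have h0 : ∀ a c : Fin n → B p r k,
      (∑ j, a j * c j = 0 ↔
        ∀ i : Fin (2 ^ k), ∑ j, Phi p r k (a j) i * Phi p r k (c j) i = 0) := by
    intro a c
    constructor
    · intro h i
      have := congrFun (congrArg (Phi p r k) h) i
      simpa [map_sum, Finset.sum_apply, map_mul, Pi.mul_apply] using this
    · intro h
      apply Phi_inj p r k
      funext i
      simp [map_sum, Finset.sum_apply, map_mul, Pi.mul_apply, h i]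
  constructor
  · rintro ⟨hcyc, hdual⟩
    refine ⟨projCode p r k n C, ?_, ?_, ?_⟩
    · ext a
      exact ⟨fun ha i => mem_projCode_self p r k n ha i, fun ha => mem_of_proj p r k n ha⟩
    · intro i
      ext g
      constructor
      · rintro ⟨cg, hcgC, hcg⟩ c hc
        obtain ⟨cc, hccC, hcc⟩ := hc
        have hcg' : cg ∈ {b : Fin n → B p r k | ∀ c ∈ C, ∑ j, b j * c j = 0} := by
          rw [← hdual]; exact hcgC
        have h1 : ∑ j, cg j * cc j = 0 := hcg' cc hccC
        have h2 := (h0 cg cc).mp h1 i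
        simp only [hcg, hcc] at h2
        exact h2
      · intro hg
        have haC : (fun b => cst p r k (g b) * eIdem p r k i) ∈ C := by
          have hmem : (fun b => cst p r k (g b) * eIdem p r k i) ∈
              {b : Fin n → B p r k | ∀ c ∈ C, ∑ j, b j * c j = 0} := by
            intro c hc
            rw [h0]
            intro i'
            by_cases hi : i' = i
            · subst hi
              have := hg (fun b => Phi p r k (c b) i') (mem_projCode_self p r k n hc i')
              simpa [lift_proj] using this
            · simp [lift_proj, hi]
          have : (fun b => cst p r k (g b) * eIdem p r k i) ∈ (C : Set (Fin n → B p r k)) := by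
            rw [hdual]; exact hmem
          exact this
        exact ⟨_, haC, fun b => by simp [lift_proj]⟩
    · intro i g hg
      obtain ⟨c, hcC, hc⟩ := hg
      refine ⟨fun b => Th p r k S (Lam p r k π t (c (b - 1))), hcyc c hcC, fun b => ?_⟩
      rw [hσ, Equiv.symm_apply_apply, hc (b - 1)]
  · rintro ⟨D, hC, hD, hcycD⟩
    have memC : ∀ a : Fin n → B p r k,
        a ∈ C ↔ ∀ i : Fin (2 ^ k), (fun b => Phi p r k (a b) i) ∈ D i := by
      intro a
      have := Set.ext_iff.mp hC a
      simpa using this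
    have liftmem : ∀ (i : Fin (2 ^ k)) (g : Fin n → GaloisField p r), g ∈ D i →
        (fun b => cst p r k (g b) * eIdem p r k i) ∈ C := by
      intro i g hg
      rw [memC]
      intro i'
      by_cases hi : i' = i
      · subst hi
        have : (fun b => Phi p r k (cst p r k (g b) * eIdem p r k i') i') = g := by
          funext b; simp [lift_proj]
        rw [this]; exact hg
      · have : (fun b => Phi p r k (cst p r k (g b) * eIdem p r k i) i') =
            (0 : Fin n → GaloisField p r) := by
          funext b; simp [lift_proj, hi]
        rw [this]; exact (D i').zero_mem
    constructor
    · intro c hc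
      rw [memC] at hc ⊢
      intro i
      have h1 := hcycD (σ.symm i) _ (hc (σ.symm i))
      rw [Equiv.apply_symm_apply] at h1
      have h2 : (fun b : Fin n => Phi p r k (Th p r k S (Lam p r k π t (c (b - 1)))) i) =
          (fun b : Fin n => Phi p r k (c (b - 1)) (σ.symm i) ^ p ^ t) := by
        funext b; exact hσ _ i
      rw [h2]
      exact h1
    · ext a
      constructor
      · intro ha c hc
        rw [h0]
        intro i
        have hpa := (memC a).mp ha i
        have hpc := (memC c).mp hc i
        have hpa' : (fun b => Phi p r k (a b) i) ∈
            {b : Fin n → GaloisField p r | ∀ c ∈ D i, ∑ j, b j * c j = 0} := by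
          rw [← hD i]; exact hpa
        exact hpa' _ hpc
      · intro ha
        show a ∈ C
        rw [memC]
        intro i
        have : (fun b => Phi p r k (a b) i) ∈
            {b : Fin n → GaloisField p r | ∀ c ∈ D i, ∑ j, b j * c j = 0} := by
          intro g hg
          have hcg := liftmem i g hg
          have h1 := ha _ hcg
          have h2 := (h0 a _).mp h1 i
          simpa [lift_proj] using h2
        rw [← SetLike.mem_coe, hD i]
        exact this
end
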